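/- arXiv:2009.14023 — 4 statements merged into one kernel-verified Lean document; each statement's English description precedes it below -/
import Mathlib

section
/- Let C be a small category. Then the category of points of the presheaf topos C ⥤ Type is equivalent to Ind(C): the assignment sending a small-colimit-preserving, finite-limit-preserving functor p : (C ⥤ Type) ⥤ Type to the presheaf coyoneda ⋙ p : Cᵒᵖ ⥤ Type lands in the full subcategory of ind-objects and defines an equivalence of categories pt(C ⥤ Type) ≌ Ind(C). -/
open CategoryTheory Limits Opposite

universe u v

/-- The category of points `pt(E)` of a category `E`: the full subcategory of `E ⥤ Type u`
spanned by the functors preserving small colimits and finite limits. -/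
abbrev PtCat (E : Type v) [Category.{u} E] :=
  ObjectProperty.FullSubcategory (fun p : E ⥤ Type u =>
    PreservesColimitsOfSize.{u, u} p ∧ PreservesFiniteLimits p)

noncomputable section

namespace PtAux

variable {C : Type u} [SmallCategory C]

def myEqv (C : Type u) [SmallCategory C] : (Cᵒᵖᵒᵖ ⥤ Type u) ≌ (C ⥤ Type u) :=
  (opOpEquivalence C).congrLeft

def coyonedaIso (C : Type u) [SmallCategory C] :
    (yoneda : Cᵒᵖ ⥤ (Cᵒᵖᵒᵖ ⥤ Type u)) ⋙ (myEqv C).functor ≅ coyoneda :=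
  NatIso.ofComponents (fun d => NatIso.ofComponents
    (fun X => Equiv.toIso ⟨Quiver.Hom.unop, Quiver.Hom.op, fun _ => rfl, fun _ => rfl⟩))

theorem lke_of_iso₁ {B D H : Type*} [Category B] [Category D] [Category H]
    {L L' : B ⥤ D} (iso : L ≅ L') {F : B ⥤ H} (F' : D ⥤ H) (α : F ⟶ L ⋙ F')
    [F'.IsLeftKanExtension α] :
    F'.IsLeftKanExtension (α ≫ Functor.whiskerRight iso.hom F') :=
  ⟨⟨(IsInitial.isInitialIffObj (Functor.leftExtensionEquivalenceOfIso₁ iso F).functor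
    (Functor.LeftExtension.mk F' α)).1 (F'.isUniversalOfIsLeftKanExtension α)⟩⟩

theorem lke_yoneda {D : Type u} [SmallCategory D] (L : (Dᵒᵖ ⥤ Type u) ⥤ Type u)
    [PreservesColimitsOfSize.{u, u} L] {A : D ⥤ Type u} (e : A ≅ yoneda ⋙ L) :
    L.IsLeftKanExtension e.hom := by
  have h := Presheaf.isLeftKanExtension_of_preservesColimits.{0} L
    (e ≪≫ Functor.isoWhiskerRight uliftYonedaIsoYoneda.{u, 0}.symm L)
  have h2 := lke_of_iso₁ uliftYonedaIsoYoneda.{u, 0} L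
    (e ≪≫ Functor.isoWhiskerRight uliftYonedaIsoYoneda.{u, 0}.symm L).hom
  convert h2 using 1
  ext; simp

theorem lke_yoneda_pres {D : Type u} [SmallCategory D] (A : D ⥤ Type u) :
    PreservesColimitsOfSize.{u, u} ((yoneda : D ⥤ (Dᵒᵖ ⥤ Type u)).leftKanExtension A) := by
  have h2 := lke_of_iso₁ (uliftYonedaIsoYoneda.{u, 0} (C := D)).symm _
    ((yoneda : D ⥤ (Dᵒᵖ ⥤ Type u)).leftKanExtensionUnit A)
  exact Presheaf.preservesColimitsOfSize_of_isLeftKanExtension.{0} _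
    ((yoneda : D ⥤ (Dᵒᵖ ⥤ Type u)).leftKanExtensionUnit A ≫
      Functor.whiskerRight (uliftYonedaIsoYoneda.{u, 0} (C := D)).symm.hom _)

instance lke_yoneda_isIso {D : Type u} [SmallCategory D] (A : D ⥤ Type u) :
    IsIso ((yoneda : D ⥤ (Dᵒᵖ ⥤ Type u)).leftKanExtensionUnit A) := by
  have h2 := lke_of_iso₁ (uliftYonedaIsoYoneda.{u, 0} (C := D)).symm _
    ((yoneda : D ⥤ (Dᵒᵖ ⥤ Type u)).leftKanExtensionUnit A)
  have : IsIso ((yoneda : D ⥤ (Dᵒᵖ ⥤ Type u)).leftKanExtensionUnit A ≫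
      Functor.whiskerRight (uliftYonedaIsoYoneda.{u, 0} (C := D)).symm.hom _) :=
    Presheaf.isIso_of_isLeftKanExtension.{0} _ _
  exact IsIso.of_isIso_comp_right _
    (Functor.whiskerRight (uliftYonedaIsoYoneda.{u, 0} (C := D)).symm.hom _)

/-- Elements of `G ⋙ F` map to elements of `F`. -/
@[simps]
def compElements {B E : Type*} [Category B] [Category E] (G : B ⥤ E) (F : E ⥤ Type w) :
    (G ⋙ F).Elements ⥤ F.Elements where
  obj e := ⟨G.obj e.1, e.2⟩
  map f := ⟨G.map f.val, f.property⟩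

instance compElementsFaithful {B E : Type*} [Category B] [Category E] (G : B ⥤ E)
    [G.Faithful] (F : E ⥤ Type w) : (compElements G F).Faithful where
  map_injective {x y} f g h := by
    apply Subtype.ext
    apply G.map_injective
    exact congrArg Subtype.val h

instance compElementsFull {B E : Type*} [Category B] [Category E] (G : B ⥤ E)
    [G.Full] [G.Faithful] (F : E ⥤ Type w) : (compElements G F).Full where
  map_surjective {x y} f := by
    refine ⟨⟨G.preimage f.val, ?_⟩, ?_⟩
    · have : F.map (G.map (G.preimage f.val)) x.2 = y.2 := by
        exact (congrArg (fun m => F.map m x.2) (G.map_preimage f.val)).trans f.property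
      exact this
    · apply Subtype.ext
      exact G.map_preimage f.val

/-- Transfer cofilteredness along a fully faithful functor with dense image. -/
theorem isCofiltered_of_dense {Dc Ec : Type*} [Category Dc] [Category Ec]
    (K : Dc ⥤ Ec) [K.Full] [K.Faithful] [IsCofiltered Ec]
    (dense : ∀ e : Ec, ∃ d : Dc, Nonempty (K.obj d ⟶ e)) : IsCofiltered Dc := by
  haveI : Nonempty Ec := IsCofiltered.nonempty
  haveI nonempty : Nonempty Dc := by
    obtain ⟨d, -⟩ := dense (Classical.arbitrary Ec)
    exact ⟨d⟩
  suffices h : IsCofilteredOrEmpty Dc by exact { }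
  refine ⟨?_, ?_⟩
  · intro X Y
    obtain ⟨d, ⟨h⟩⟩ := dense (IsCofiltered.min (K.obj X) (K.obj Y))
    exact ⟨d, K.preimage (h ≫ IsCofiltered.minToLeft _ _),
      K.preimage (h ≫ IsCofiltered.minToRight _ _), trivial⟩
  · intro X Y f g
    obtain ⟨d, ⟨h⟩⟩ := dense (IsCofiltered.eq (K.map f) (K.map g))
    refine ⟨d, K.preimage (h ≫ IsCofiltered.eqHom _ _), ?_⟩
    apply K.map_injective
    simp only [Functor.map_comp, Functor.map_preimage, Category.assoc]
    rw [IsCofiltered.eq_condition]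


section PartA

variable (p : (C ⥤ Type u) ⥤ Type u) [PreservesColimitsOfSize.{u, u} p]

theorem density (e : p.Elements) :
    ∃ (d : Cᵒᵖ) (g : coyoneda.obj d ⟶ e.1) (x : p.obj (coyoneda.obj d)),
      p.map g x = e.2 := by
  change (Σ c : C ⥤ Type u, p.obj c) at e
  let P : Cᵒᵖᵒᵖ ⥤ Type u := (myEqv C).inverse.obj e.1
  let T : (Cᵒᵖᵒᵖ ⥤ Type u) ⥤ Type u := (myEqv C).functor ⋙ p
  have hc : IsColimit (T.mapCocone (Presheaf.tautologicalCocone P)) :=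
    isColimitOfPreserves T (Presheaf.isColimitTautologicalCocone P)
  obtain ⟨j, z, hz⟩ := Types.jointly_surjective _ hc
    (p.map ((myEqv C).counitIso.inv.app e.1) e.2)
  change p.obj ((yoneda ⋙ (myEqv C).functor).obj j.left) at z
  refine ⟨j.left,
    (coyonedaIso C).inv.app _ ≫
      (myEqv C).functor.map j.hom ≫
      (myEqv C).counitIso.hom.app e.1,
    p.map ((coyonedaIso C).hom.app _) z, ?_⟩
  have hz' : p.map ((myEqv C).functor.map j.hom) z
      = p.map ((myEqv C).counitIso.inv.app e.1) e.2 := hz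
  simp only [← FunctorToTypes.map_comp_apply, Category.assoc]
  rw [Iso.hom_inv_id_app_assoc]
  rw [FunctorToTypes.map_comp_apply, hz', ← FunctorToTypes.map_comp_apply,
    Iso.inv_hom_id_app, FunctorToTypes.map_id_apply]

variable [PreservesFiniteLimits p]

theorem partA : IsIndObject (coyoneda ⋙ p) := by
  haveI : HasFiniteLimits p.Elements := ⟨fun J _ _ => inferInstance⟩
  haveI : IsCofiltered p.Elements := IsCofiltered.of_hasFiniteLimits _
  haveI : IsCofiltered (coyoneda ⋙ p).Elements := by
    apply isCofiltered_of_dense (compElements coyoneda p)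
    intro e
    obtain ⟨d, g, x, h⟩ := density p e
    exact ⟨⟨d, x⟩, ⟨⟨g, h⟩⟩⟩
  rw [isIndObject_iff]
  constructor
  · exact IsFiltered.of_equivalence (CategoryOfElements.costructuredArrowYonedaEquivalence _)
  · haveI : EssentiallySmall.{u} (coyoneda ⋙ p).Elements := essentiallySmallSelf _
    exact finallySmall_of_final_of_essentiallySmall
      (CategoryOfElements.costructuredArrowYonedaEquivalence _).functor

end PartA


section PartB

/-- Restriction of evaluation along yoneda is the corepresentable-as-presheaf. -/
def evalRestrictIso (c : C) :
    (yoneda.obj c : Cᵒᵖ ⥤ Type u) ≅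
      (yoneda : Cᵒᵖ ⥤ (Cᵒᵖᵒᵖ ⥤ Type u)) ⋙ (evaluation Cᵒᵖᵒᵖ (Type u)).obj (op (op c)) :=
  NatIso.ofComponents
    (fun d => Equiv.toIso ⟨Quiver.Hom.op, Quiver.Hom.unop, fun _ => rfl, fun _ => rfl⟩)

theorem preservesFiniteLimits_lanObj_yonedaObj (c : C) :
    PreservesFiniteLimits ((yoneda : Cᵒᵖ ⥤ (Cᵒᵖᵒᵖ ⥤ Type u)).lan.obj (yoneda.obj c)) := by
  let N := (evaluation Cᵒᵖᵒᵖ (Type u)).obj (op (op c))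
  haveI : PreservesColimitsOfSize.{u, u} N :=
    { preservesColimitsOfShape := fun {_} {_} => inferInstance }
  haveI : N.IsLeftKanExtension (evalRestrictIso c).hom :=
    lke_yoneda N (evalRestrictIso c)
  have iso : N ≅ (yoneda : Cᵒᵖ ⥤ (Cᵒᵖᵒᵖ ⥤ Type u)).lan.obj (yoneda.obj c) :=
    Functor.leftKanExtensionUnique N (evalRestrictIso c).hom _
      ((yoneda : Cᵒᵖ ⥤ (Cᵒᵖᵒᵖ ⥤ Type u)).lanUnit.app (yoneda.obj c))
  haveI : PreservesFiniteLimits N := ⟨fun J _ _ => inferInstance⟩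
  exact preservesFiniteLimits_of_natIso iso

theorem preservesFiniteLimits_leftKanExtension_of_isIndObject {A : Cᵒᵖ ⥤ Type u}
    (hA : IsIndObject A) :
    PreservesFiniteLimits ((yoneda : Cᵒᵖ ⥤ (Cᵒᵖᵒᵖ ⥤ Type u)).leftKanExtension A) := by
  let lanY : (Cᵒᵖ ⥤ Type u) ⥤ ((Cᵒᵖᵒᵖ ⥤ Type u) ⥤ Type u) :=
    (yoneda : Cᵒᵖ ⥤ (Cᵒᵖᵒᵖ ⥤ Type u)).lan
  let pres := hA.presentation
  haveI : PreservesColimitsOfSize.{u, u} lanY :=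
    (Functor.lanAdjunction _ _).leftAdjoint_preservesColimits
  have hcol : IsColimit (lanY.mapCocone pres.cocone) :=
    isColimitOfPreserves lanY pres.coconeIsColimit
  have iso1 : lanY.obj A ≅ colimit ((pres.F ⋙ yoneda) ⋙ lanY) :=
    hcol.coconePointUniqueUpToIso (colimit.isColimit _)
  have iso2 : colimit ((pres.F ⋙ yoneda) ⋙ lanY) ≅
      ((pres.F ⋙ yoneda) ⋙ lanY).flip ⋙ colim := colimitIsoFlipCompColim _
  haveI : PreservesFiniteLimits (((pres.F ⋙ yoneda) ⋙ lanY).flip) := by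
    refine ⟨fun J _ _ => preservesLimitsOfShape_of_evaluation _ J (fun i => ?_)⟩
    haveI : PreservesFiniteLimits (((pres.F ⋙ yoneda) ⋙ lanY).obj i) :=
      preservesFiniteLimits_lanObj_yonedaObj (C := C) (pres.F.obj i)
    haveI : PreservesLimitsOfShape J (((pres.F ⋙ yoneda) ⋙ lanY).obj i) :=
      PreservesFiniteLimits.preservesFiniteLimits J
    exact preservesLimitsOfShape_of_natIso (flipCompEvaluation _ i).symm
  haveI : PreservesFiniteLimits (colim : (pres.I ⥤ Type u) ⥤ Type u) := inferInstance
  haveI : PreservesFiniteLimits (((pres.F ⋙ yoneda) ⋙ lanY).flip ⋙ colim) :=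
    comp_preservesFiniteLimits _ _
  have iso0 : (yoneda : Cᵒᵖ ⥤ (Cᵒᵖᵒᵖ ⥤ Type u)).leftKanExtension A ≅ lanY.obj A :=
    Functor.leftKanExtensionUnique _ (Functor.leftKanExtensionUnit _ A) _ ((yoneda : Cᵒᵖ ⥤ (Cᵒᵖᵒᵖ ⥤ Type u)).lanUnit.app A)
  exact preservesFiniteLimits_of_natIso (iso0 ≪≫ iso1 ≪≫ iso2).symm

end PartB


section Hom

variable {p q : (C ⥤ Type u) ⥤ Type u}
  [PreservesColimitsOfSize.{u, u} p] [PreservesColimitsOfSize.{u, u} q]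

theorem whiskerLeft_coyoneda_injective (η ζ : p ⟶ q)
    (h : Functor.whiskerLeft coyoneda η = Functor.whiskerLeft coyoneda ζ) : η = ζ := by
  let Mp := (myEqv C).functor ⋙ p
  let Mq := (myEqv C).functor ⋙ q
  haveI : Mp.IsLeftKanExtension (𝟙 (yoneda ⋙ Mp)) :=
    lke_yoneda Mp (Iso.refl _)
  have step : Functor.whiskerLeft (myEqv C).functor η = Functor.whiskerLeft (myEqv C).functor ζ := by
    apply Functor.hom_ext_of_isLeftKanExtension (α := (𝟙 (yoneda ⋙ Mp)))
    refine NatTrans.ext (funext fun d => ?_)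
    simp only [NatTrans.comp_app, NatTrans.id_app, Functor.whiskerLeft_app, Category.id_comp]
    have hd : η.app (coyoneda.obj d) = ζ.app (coyoneda.obj d) := congr_app h d
    change η.app ((yoneda ⋙ (myEqv C).functor).obj d) = ζ.app ((yoneda ⋙ (myEqv C).functor).obj d)
    rw [← cancel_mono (q.map ((coyonedaIso C).hom.app d)),
      ← η.naturality ((coyonedaIso C).hom.app d),
      ← ζ.naturality ((coyonedaIso C).hom.app d), hd]
  exact ((myEqv C).symm.congrLeft (E := Type u)).functor.map_injective step

theorem whiskerLeft_coyoneda_surjective (φ : coyoneda ⋙ p ⟶ coyoneda ⋙ q) :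
    ∃ η : p ⟶ q, Functor.whiskerLeft coyoneda η = φ := by
  let Mp := (myEqv C).functor ⋙ p
  let Mq := (myEqv C).functor ⋙ q
  haveI : Mp.IsLeftKanExtension (𝟙 (yoneda ⋙ Mp)) :=
    lke_yoneda Mp (Iso.refl _)
  let ψ : yoneda ⋙ Mp ⟶ yoneda ⋙ Mq :=
    (Functor.isoWhiskerRight (coyonedaIso C) p).hom ≫ φ ≫ (Functor.isoWhiskerRight (coyonedaIso C) q).inv
  let η' : Mp ⟶ Mq := Functor.descOfIsLeftKanExtension Mp (𝟙 (yoneda ⋙ Mp)) Mq ψ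
  have fac : 𝟙 (yoneda ⋙ Mp) ≫ Functor.whiskerLeft yoneda η' = ψ :=
    Functor.descOfIsLeftKanExtension_fac Mp (𝟙 (yoneda ⋙ Mp)) Mq ψ
  rw [Category.id_comp] at fac
  let W := ((myEqv C).symm.congrLeft (E := Type u)).functor
  refine ⟨W.preimage η', ?_⟩
  have hW : Functor.whiskerLeft (myEqv C).functor (W.preimage η') = η' := W.map_preimage η'
  refine NatTrans.ext (funext fun d => ?_)
  have hd : (W.preimage η').app ((yoneda ⋙ (myEqv C).functor).obj d) = ψ.app d := by
    have h1 : (Functor.whiskerLeft (myEqv C).functor (W.preimage η')).app (yoneda.obj d)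
        = η'.app (yoneda.obj d) := congr_app hW (yoneda.obj d)
    have h2 : η'.app (yoneda.obj d) = ψ.app d := congr_app fac d
    exact h1.trans h2
  show (W.preimage η').app (coyoneda.obj d) = φ.app d
  rw [← cancel_epi (p.map ((coyonedaIso C).hom.app d)),
    (W.preimage η').naturality ((coyonedaIso C).hom.app d), hd]
  simp only [ψ, NatTrans.comp_app, Functor.isoWhiskerRight_hom, Functor.isoWhiskerRight_inv,
    Functor.whiskerRight_app, Category.assoc, ← q.map_comp, Iso.inv_hom_id_app]
  simp

end Hom


section Point

variable (A : Cᵒᵖ ⥤ Type u)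

def pointFunctor : (C ⥤ Type u) ⥤ Type u :=
  (myEqv C).inverse ⋙ (yoneda : Cᵒᵖ ⥤ (Cᵒᵖᵒᵖ ⥤ Type u)).leftKanExtension A

instance : PreservesColimitsOfSize.{u, u} (pointFunctor A) := by
  haveI h1 : PreservesColimitsOfSize.{u, u}
      ((yoneda : Cᵒᵖ ⥤ (Cᵒᵖᵒᵖ ⥤ Type u)).leftKanExtension A) :=
    lke_yoneda_pres A
  exact inferInstanceAs (PreservesColimitsOfSize.{u, u}
    ((myEqv C).inverse ⋙ (yoneda : Cᵒᵖ ⥤ (Cᵒᵖᵒᵖ ⥤ Type u)).leftKanExtension A))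

theorem pointFunctor_preservesFiniteLimits (hA : IsIndObject A) :
    PreservesFiniteLimits (pointFunctor A) := by
  haveI := preservesFiniteLimits_leftKanExtension_of_isIndObject hA
  haveI : PreservesFiniteLimits (myEqv C).inverse := ⟨fun J _ _ => inferInstance⟩
  exact comp_preservesFiniteLimits _ _

def pointRestrictIso : coyoneda ⋙ pointFunctor A ≅ A :=
  Functor.isoWhiskerRight (coyonedaIso C).symm
      ((myEqv C).inverse ⋙ (yoneda : Cᵒᵖ ⥤ (Cᵒᵖᵒᵖ ⥤ Type u)).leftKanExtension A) ≪≫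
    Functor.isoWhiskerLeft (yoneda : Cᵒᵖ ⥤ (Cᵒᵖᵒᵖ ⥤ Type u))
      (Functor.isoWhiskerRight (myEqv C).unitIso.symm
        ((yoneda : Cᵒᵖ ⥤ (Cᵒᵖᵒᵖ ⥤ Type u)).leftKanExtension A)) ≪≫
    Functor.isoWhiskerLeft (yoneda : Cᵒᵖ ⥤ (Cᵒᵖᵒᵖ ⥤ Type u))
      (Functor.leftUnitor ((yoneda : Cᵒᵖ ⥤ (Cᵒᵖᵒᵖ ⥤ Type u)).leftKanExtension A)) ≪≫
    (asIso ((yoneda : Cᵒᵖ ⥤ (Cᵒᵖᵒᵖ ⥤ Type u)).leftKanExtensionUnit A)).symm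

end Point


section Assemble

variable (C : Type u) [SmallCategory C]

theorem partA' (p : PtCat (C ⥤ Type u)) : IsIndObject (coyoneda ⋙ p.obj) := by
  haveI := p.property.1; haveI := p.property.2
  exact partA p.obj

def Flift : PtCat (C ⥤ Type u) ⥤ ObjectProperty.FullSubcategory (IsIndObject (C := C)) :=
  ObjectProperty.lift _
    (ObjectProperty.ι _ ⋙ (Functor.whiskeringLeft Cᵒᵖ (C ⥤ Type u) (Type u)).obj coyoneda)
    (partA' C)

instance : (Flift C).Faithful where
  map_injective {p q} f g h := by
    haveI := p.property.1; haveI := q.property.1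
    exact ObjectProperty.hom_ext _ (whiskerLeft_coyoneda_injective f.hom g.hom (congrArg (fun k => k.hom) h))

instance : (Flift C).Full where
  map_surjective {p q} φ := by
    haveI := p.property.1; haveI := q.property.1
    obtain ⟨η, hη⟩ := whiskerLeft_coyoneda_surjective (p := p.obj) (q := q.obj) φ.hom
    exact ⟨ObjectProperty.homMk η, ObjectProperty.hom_ext _ hη⟩

instance : (Flift C).EssSurj where
  mem_essImage Y := by
    haveI : PreservesFiniteLimits (pointFunctor Y.obj) :=
      pointFunctor_preservesFiniteLimits _ Y.property
    refine ⟨⟨pointFunctor Y.obj, inferInstance, inferInstance⟩, ⟨?_⟩⟩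
    exact ⟨ObjectProperty.homMk (pointRestrictIso Y.obj).hom,
      ObjectProperty.homMk (pointRestrictIso Y.obj).inv,
      by ext1; exact (pointRestrictIso Y.obj).hom_inv_id,
      by ext1; exact (pointRestrictIso Y.obj).inv_hom_id⟩

instance : (Flift C).IsEquivalence := { }

def theEquiv : PtCat (C ⥤ Type u) ≌ Ind C :=
  (Flift C).asEquivalence.trans (Ind.equivalence C).symm

end Assemble

end PtAux

end

/-- The category of points of the presheaf topos `C ⥤ Type u` is equivalent to `Ind C`: every
point `p : (C ⥤ Type u) ⥤ Type u` yields an ind-object `coyoneda ⋙ p : Cᵒᵖ ⥤ Type u`, and this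
assignment defines an equivalence `pt(C ⥤ Type u) ≌ Ind C`. -/
theorem pt_presheaf_equiv_ind (C : Type u) [SmallCategory C] :
    (∀ p : PtCat (C ⥤ Type u), IsIndObject (coyoneda ⋙ p.obj)) ∧
    ∃ e : PtCat (C ⥤ Type u) ≌ Ind C,
      ∀ p : PtCat (C ⥤ Type u),
        Nonempty ((Ind.inclusion C).obj (e.functor.obj p) ≅ coyoneda ⋙ p.obj) := by
  constructor
  · exact PtAux.partA' C
  · refine ⟨PtAux.theEquiv C, fun p => ⟨?_⟩⟩
    exact (ObjectProperty.ι _).mapIso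
      ((Ind.equivalence C).counitIso.app ((PtAux.Flift C).obj p))
end

section
/- Let E be a category and let F be a category with small colimits and finite limits in which filtered colimits commute with finite limits (for instance a Grothendieck topos). Then the full subcategory of the functor category E ⥤ F spanned by the functors preserving small colimits and finite limits is closed under filtered colimits in E ⥤ F; in particular this subcategory has filtered colimits, computed pointwise. -/
open CategoryTheory Limits Opposite

universe u v

/-- The category `Cocontlex(E, F)` of functors `E ⥤ F` preserving small colimits and finite
limits (the hom-category `Topoi(F, E)` of geometric morphisms when `E` and `F` are topoi). -/
abbrev CocontLex (E : Type (u + 1)) [Category.{u} E] (F : Type (u + 1)) [Category.{u} F] :=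
  ObjectProperty.FullSubcategory (fun p : E ⥤ F =>
    PreservesColimitsOfSize.{u, u} p ∧ PreservesFiniteLimits p)

lemma cocontlex_aux
    (E : Type (u + 1)) [Category.{u} E]
    (F : Type (u + 1)) [Category.{u} F] [HasColimitsOfSize.{u, u} F] [HasFiniteLimits F]
    (hcomm : ∀ (I : Type u) [SmallCategory I], IsFiltered I →
      PreservesFiniteLimits (colim : (I ⥤ F) ⥤ F))
    (I : Type u) [SmallCategory I] (hI : IsFiltered I)
    (D : I ⥤ (E ⥤ F))
    (hD : ∀ i, PreservesColimitsOfSize.{u, u} (D.obj i) ∧ PreservesFiniteLimits (D.obj i))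
    (c : Cocone D) (hc : IsColimit c) :
    PreservesColimitsOfSize.{u, u} c.pt ∧ PreservesFiniteLimits c.pt := by
  have iso : c.pt ≅ D.flip ⋙ colim :=
    hc.coconePointUniqueUpToIso (colimit.isColimit D) ≪≫ colimitIsoFlipCompColim D
  -- `D.flip` preserves colimits and finite limits, as these are pointwise in `I ⥤ F`.
  have h1 : PreservesColimitsOfSize.{u, u} D.flip :=
    preservesColimits_of_evaluation _ fun i =>
      have := (hD i).1
      preservesColimits_of_natIso (flipCompEvaluation D i).symm
  have h2 : PreservesFiniteLimits D.flip := by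
    constructor
    intro J _ _
    exact preservesLimitsOfShape_of_evaluation _ J fun i =>
      have := (hD i).2
      preservesLimitsOfShape_of_natIso (flipCompEvaluation D i).symm
  -- `colim : (I ⥤ F) ⥤ F` preserves colimits (it is a left adjoint) and finite limits (`hcomm`).
  have h3 : PreservesColimitsOfSize.{u, u} (colim : (I ⥤ F) ⥤ F) :=
    (colimConstAdj (J := I) (C := F)).leftAdjoint_preservesColimits
  have h4 : PreservesFiniteLimits (colim : (I ⥤ F) ⥤ F) := hcomm I hI
  constructor
  · have := comp_preservesColimits D.flip (colim : (I ⥤ F) ⥤ F)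
    exact preservesColimits_of_natIso iso.symm
  · have := comp_preservesFiniteLimits D.flip (colim : (I ⥤ F) ⥤ F)
    exact preservesFiniteLimits_of_natIso iso.symm

/-- Let `E` be a category and `F` a category with small colimits and finite limits in which
filtered colimits commute with finite limits.  Then the full subcategory `Cocontlex(E, F)` of
`E ⥤ F` spanned by the functors preserving small colimits and finite limits is closed under
filtered colimits in `E ⥤ F`; in particular it has filtered colimits, computed pointwise. -/
theorem cocontlex_closed_under_filtered_colimits
    (E : Type (u + 1)) [Category.{u} E]
    (F : Type (u + 1)) [Category.{u} F] [HasColimitsOfSize.{u, u} F] [HasFiniteLimits F]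
    (hcomm : ∀ (I : Type u) [SmallCategory I], IsFiltered I →
      PreservesFiniteLimits (colim : (I ⥤ F) ⥤ F)) :
    ∀ (I : Type u) [SmallCategory I], IsFiltered I →
      (∀ D : I ⥤ (E ⥤ F),
        (∀ i, PreservesColimitsOfSize.{u, u} (D.obj i) ∧ PreservesFiniteLimits (D.obj i)) →
        ∀ c : Cocone D, IsColimit c →
          PreservesColimitsOfSize.{u, u} c.pt ∧ PreservesFiniteLimits c.pt) ∧
      HasColimitsOfShape I (CocontLex E F) := by
  intro I _ hI
  refine ⟨cocontlex_aux E F hcomm I hI, ?_⟩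
  have : ObjectProperty.IsClosedUnderColimitsOfShape (fun p : E ⥤ F =>
      PreservesColimitsOfSize.{u, u} p ∧ PreservesFiniteLimits p) I :=
    ⟨by rintro X ⟨p⟩; exact cocontlex_aux E F hcomm I hI p.diag p.prop_diag_obj _ p.isColimit⟩
  exact hasColimitsOfShape_of_closedUnderColimits I _
end

section
/- Let E and G be categories with small colimits and finite limits, and let i^* : E ⥤ G be a functor admitting a fully faithful right adjoint i_* : G ⥤ E, with i^* preserving finite limits (so that the adjunction i^* ⊣ i_* is a geometric embedding when E and G are topoi). Then the induced functor pt(G) ⥤ pt(E), sending a point p : G ⥤ Type to i^* ⋙ p and a natural transformation μ to its whiskering with i^*, is fully faithful. -/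
open CategoryTheory Limits Opposite

universe u v

variable {E G : Type (u + 1)} [Category.{u} E] [Category.{u} G]

/-- The functor `pt(G) ⥤ pt(E)` induced by the inverse image `i^* : E ⥤ G` of a geometric
morphism: it sends a point `p : G ⥤ Type u` to `i^* ⋙ p`, and a natural transformation to its
whiskering with `i^*`. -/
def ptMap (i : E ⥤ G) (i' : G ⥤ E) (adj : i ⊣ i') [PreservesFiniteLimits i] :
    PtCat G ⥤ PtCat E :=
  ObjectProperty.lift _
    (ObjectProperty.ι _ ⋙ (Functor.whiskeringLeft E G (Type u)).obj i)
    (fun p => by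
      haveI := p.property.1; haveI := p.property.2
      haveI : PreservesColimitsOfSize.{u, u} i := adj.leftAdjoint_preservesColimits
      exact ⟨inferInstanceAs (PreservesColimitsOfSize.{u, u} (i ⋙ p.obj)),
        comp_preservesFiniteLimits i p.obj⟩)

/-- `pt` sends geometric embeddings to fully faithful functors: if `i^* : E ⥤ G` preserves
finite limits and admits a fully faithful right adjoint `i_* : G ⥤ E` (a geometric embedding
when `E` and `G` are topoi), then the induced functor `pt(G) ⥤ pt(E)`, `p ↦ i^* ⋙ p`, is fully
faithful. -/
theorem ptMap_full_and_faithful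
    [HasColimitsOfSize.{u, u} E] [HasFiniteLimits E]
    [HasColimitsOfSize.{u, u} G] [HasFiniteLimits G]
    (i : E ⥤ G) (i' : G ⥤ E) (adj : i ⊣ i') [i'.Full] [i'.Faithful]
    [PreservesFiniteLimits i] :
    (ptMap i i' adj).Full ∧ (ptMap i i' adj).Faithful := by
  have key : ∀ {p q : PtCat G} (ν : (ptMap i i' adj).obj p ⟶ (ptMap i i' adj).obj q),
      ∃ μ : p ⟶ q, (ptMap i i' adj).map μ = ν := by
    intro p q ν
    refine ⟨⟨fun Y => p.obj.map (inv (adj.counit.app Y)) ≫ ν.hom.app (i'.obj Y) ≫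
        q.obj.map (adj.counit.app Y), ?_⟩, ?_⟩
    · intro Y Z f
      dsimp
      have h1 : f ≫ inv (adj.counit.app Z) = inv (adj.counit.app Y) ≫ i.map (i'.map f) := by
        rw [IsIso.eq_inv_comp, ← Category.assoc, IsIso.comp_inv_eq]
        simpa using (adj.counit.naturality f).symm
      have h2 : p.obj.map (i.map (i'.map f)) ≫ ν.hom.app (i'.obj Z) =
          ν.hom.app (i'.obj Y) ≫ q.obj.map (i.map (i'.map f)) := ν.hom.naturality (i'.map f)
      have hc : i.map (i'.map f) ≫ adj.counit.app Z = adj.counit.app Y ≫ f := by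
        simpa using adj.counit.naturality f
      rw [← Functor.map_comp_assoc, h1, Functor.map_comp_assoc]
      erw [reassoc_of% h2]
      erw [Category.assoc, ← q.obj.map_comp, hc]
      simp [Functor.map_comp]
      exact (Category.assoc _ _ _).symm
    · apply InducedCategory.hom_ext; apply NatTrans.ext
      funext X
      show p.obj.map (inv (adj.counit.app (i.obj X))) ≫ ν.hom.app (i'.obj (i.obj X)) ≫
        q.obj.map (adj.counit.app (i.obj X)) = ν.hom.app X
      have ht : i.map (adj.unit.app X) ≫ adj.counit.app (i.obj X) = 𝟙 _ :=
        adj.left_triangle_components X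
      have hinv : inv (adj.counit.app (i.obj X)) = i.map (adj.unit.app X) :=
        IsIso.inv_eq_of_inv_hom_id ht
      have h2 : p.obj.map (i.map (adj.unit.app X)) ≫ ν.hom.app (i'.obj (i.obj X)) =
          ν.hom.app X ≫ q.obj.map (i.map (adj.unit.app X)) := ν.hom.naturality (adj.unit.app X)
      rw [hinv]; erw [reassoc_of% h2]; erw [Category.assoc, ← q.obj.map_comp, ht]
      simp
      rfl
  constructor
  · exact ⟨fun ν => ⟨(key ν).choose, (key ν).choose_spec⟩⟩
  · constructor
    intro p q μ μ' h
    apply InducedCategory.hom_ext; apply NatTrans.ext; funext Y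
    have hY : ∀ (μ : p ⟶ q), μ.hom.app Y = p.obj.map (inv (adj.counit.app Y)) ≫
        (μ.hom.app (i.obj (i'.obj Y)) ≫ q.obj.map (adj.counit.app Y)) := by
      intro μ
      rw [← μ.hom.naturality, ← Functor.map_comp_assoc, IsIso.inv_hom_id]
      simp
    have h' : μ.hom.app (i.obj (i'.obj Y)) = μ'.hom.app (i.obj (i'.obj Y)) :=
      congrFun (congrArg (fun f => f.hom.app) h) (i'.obj Y)
    rw [hY μ, hY μ', h']
end

section
/- Let f : E ⥤ G be a functor such that every object of G is a subquotient of an object in the image of f, i.e. for every object g of G there exist an object e of E, an object g' of G, a monomorphism m : g ⟶ g' and an epimorphism l : f(e) ⟶ g'. Let p, q : G ⥤ Type be functors such that p preserves epimorphisms and q preserves monomorphisms, and let μ, ν : p ⟶ q be natural transformations. If the whiskered transformations whiskerLeft f μ and whiskerLeft f ν (with components μ_{f(e)} and ν_{f(e)}) are equal, then μ = ν. (This is the key step showing that pt sends localic geometric morphisms to faithful functors, since the inverse image of a point of a topos preserves epimorphisms and monomorphisms.) -/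
open CategoryTheory Limits Opposite

universe u v

universe w v₁ v₂ u₁ u₂

/-- If every object of `G` is a subquotient of an object in the image of `f : E ⥤ G`, then two
natural transformations `μ ν : p ⟶ q` between functors `p q : G ⥤ Type w`, where `p` preserves
epimorphisms and `q` preserves monomorphisms, agree as soon as their whiskerings with `f`
agree.  (This is the key step showing that `pt` sends localic geometric morphisms to faithful
functors.) -/
theorem natTrans_ext_of_subquotients
    {E : Type u₁} [Category.{v₁} E] {G : Type u₂} [Category.{v₂} G] (f : E ⥤ G)
    (hsub : ∀ g : G, ∃ (e : E) (g' : G) (m : g ⟶ g') (l : f.obj e ⟶ g'), Mono m ∧ Epi l)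
    (p q : G ⥤ Type w) [p.PreservesEpimorphisms] [q.PreservesMonomorphisms]
    (μ ν : p ⟶ q) (h : Functor.whiskerLeft f μ = Functor.whiskerLeft f ν) : μ = ν := by
  ext g x
  obtain ⟨e, g', m, l, hm, hl⟩ := hsub g
  have hql : Mono (q.map m) := q.map_mono m
  have hpl : Epi (p.map l) := p.map_epi l
  have hsurj : Function.Surjective (p.map l) :=
    (epi_iff_surjective (p.map l)).mp hpl
  have hinj : Function.Injective (q.map m) :=
    (mono_iff_injective (q.map m)).mp hql
  apply hinj
  have h1 : q.map m (μ.app g x) = μ.app g' (p.map m x) :=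
    (FunctorToTypes.naturality (φ := μ) (f := m) (x := x)).symm
  have h2 : q.map m (ν.app g x) = ν.app g' (p.map m x) :=
    (FunctorToTypes.naturality (φ := ν) (f := m) (x := x)).symm
  show q.map m (μ.app g x) = q.map m (ν.app g x)
  rw [h1, h2]
  obtain ⟨y, hy⟩ := hsurj (p.map m x)
  rw [← hy]
  have h3 : μ.app g' (p.map l y) = q.map l (μ.app (f.obj e) y) :=
    FunctorToTypes.naturality (φ := μ) (f := l) (x := y)
  have h4 : ν.app g' (p.map l y) = q.map l (ν.app (f.obj e) y) :=
    FunctorToTypes.naturality (φ := ν) (f := l) (x := y)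
  rw [h3, h4]
  exact congrArg (q.map l) (congrFun (congrArg (fun t => t.app e) h) y)
end
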